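/- arXiv:2309.10793 — 2 statements merged into one kernel-verified Lean document; each statement's English description precedes it below -/
import Mathlib

section
/- Let V be a finite-dimensional complex vector space. Then GO(S)° acts freely on the set of linear maps f : V → S whose pullback form f*ω_S has rank at least r − 1; that is, if f : V → S is a linear map with rank(f*ω_S) ≥ r − 1 and φ ∈ GO(S)° satisfies φ ∘ f = f, then φ is the identity. -/
open Matrix

noncomputable section

variable {r : ℕ}

/-- The orthogonal similitude group `GO(ω)` as a subgroup of `GL(r, ℂ)`:
invertible matrices `φ` with `φᵀ * ω * φ = c • ω` for some unit scalar `c`. -/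
def GOmat (r : ℕ) (ω : Matrix (Fin r) (Fin r) ℂ) : Subgroup (GL (Fin r) ℂ) where
  carrier := {φ | ∃ c : ℂˣ,
    (φ : Matrix (Fin r) (Fin r) ℂ)ᵀ * ω * (φ : Matrix (Fin r) (Fin r) ℂ) = (c : ℂ) • ω}
  one_mem' := ⟨1, by simp⟩
  mul_mem' := by
    rintro φ ψ ⟨c, hc⟩ ⟨d, hd⟩
    refine ⟨c * d, ?_⟩
    have h : ((φ * ψ : GL (Fin r) ℂ) : Matrix (Fin r) (Fin r) ℂ)
        = (φ : Matrix (Fin r) (Fin r) ℂ) * (ψ : Matrix (Fin r) (Fin r) ℂ) := rfl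
    calc ((φ * ψ : GL (Fin r) ℂ) : Matrix (Fin r) (Fin r) ℂ)ᵀ * ω * (φ * ψ : GL (Fin r) ℂ)
        = (ψ : Matrix (Fin r) (Fin r) ℂ)ᵀ *
            (((φ : Matrix (Fin r) (Fin r) ℂ)ᵀ * ω * (φ : Matrix (Fin r) (Fin r) ℂ)) *
              (ψ : Matrix (Fin r) (Fin r) ℂ)) := by
          rw [h, transpose_mul]; noncomm_ring
      _ = ((c : ℂ) * (d : ℂ)) • ω := by
          rw [hc, Matrix.smul_mul, Matrix.mul_smul, ← Matrix.mul_assoc, hd, smul_smul]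
      _ = ((c * d : ℂˣ) : ℂ) • ω := by rw [Units.val_mul]
  inv_mem' := by
    rintro φ ⟨c, hc⟩
    refine ⟨c⁻¹, ?_⟩
    have h1 : ((φ⁻¹ : GL (Fin r) ℂ) : Matrix (Fin r) (Fin r) ℂ) *
        (φ : Matrix (Fin r) (Fin r) ℂ) = 1 := φ.inv_mul
    have h2 : (φ : Matrix (Fin r) (Fin r) ℂ) *
        ((φ⁻¹ : GL (Fin r) ℂ) : Matrix (Fin r) (Fin r) ℂ) = 1 := φ.mul_inv
    have key : ω = (c : ℂ) • (((φ⁻¹ : GL (Fin r) ℂ) : Matrix (Fin r) (Fin r) ℂ)ᵀ * ω *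
        ((φ⁻¹ : GL (Fin r) ℂ) : Matrix (Fin r) (Fin r) ℂ)) := by
      calc ω = (((φ : Matrix (Fin r) (Fin r) ℂ) *
              ((φ⁻¹ : GL (Fin r) ℂ) : Matrix (Fin r) (Fin r) ℂ))ᵀ) * ω *
              ((φ : Matrix (Fin r) (Fin r) ℂ) *
              ((φ⁻¹ : GL (Fin r) ℂ) : Matrix (Fin r) (Fin r) ℂ)) := by
            rw [h2]; simp
        _ = ((φ⁻¹ : GL (Fin r) ℂ) : Matrix (Fin r) (Fin r) ℂ)ᵀ *
              (((φ : Matrix (Fin r) (Fin r) ℂ)ᵀ * ω * (φ : Matrix (Fin r) (Fin r) ℂ)) *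
              ((φ⁻¹ : GL (Fin r) ℂ) : Matrix (Fin r) (Fin r) ℂ)) := by
            rw [transpose_mul]; noncomm_ring
        _ = (c : ℂ) • (((φ⁻¹ : GL (Fin r) ℂ) : Matrix (Fin r) (Fin r) ℂ)ᵀ * ω *
              ((φ⁻¹ : GL (Fin r) ℂ) : Matrix (Fin r) (Fin r) ℂ)) := by
            rw [hc, Matrix.smul_mul, Matrix.mul_smul]; noncomm_ring
    calc ((φ⁻¹ : GL (Fin r) ℂ) : Matrix (Fin r) (Fin r) ℂ)ᵀ * ω * (φ⁻¹ : GL (Fin r) ℂ)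
        = ((c⁻¹ : ℂˣ) : ℂ) • ((c : ℂ) • (((φ⁻¹ : GL (Fin r) ℂ) : Matrix (Fin r) (Fin r) ℂ)ᵀ *
            ω * ((φ⁻¹ : GL (Fin r) ℂ) : Matrix (Fin r) (Fin r) ℂ))) := by
          rw [smul_smul]; norm_num
      _ = ((c⁻¹ : ℂˣ) : ℂ) • ω := by rw [← key]

/-- The orthogonal group `O(ω)` as a subgroup of `GL(r, ℂ)`. -/
def Omat (r : ℕ) (ω : Matrix (Fin r) (Fin r) ℂ) : Subgroup (GL (Fin r) ℂ) where
  carrier := {φ | (φ : Matrix (Fin r) (Fin r) ℂ)ᵀ * ω * (φ : Matrix (Fin r) (Fin r) ℂ) = ω}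
  one_mem' := by simp
  mul_mem' := by
    intro φ ψ hφ hψ
    have h : ((φ * ψ : GL (Fin r) ℂ) : Matrix (Fin r) (Fin r) ℂ)
        = (φ : Matrix (Fin r) (Fin r) ℂ) * (ψ : Matrix (Fin r) (Fin r) ℂ) := rfl
    show ((φ * ψ : GL (Fin r) ℂ) : Matrix (Fin r) (Fin r) ℂ)ᵀ * ω * (φ * ψ : GL (Fin r) ℂ) = ω
    calc ((φ * ψ : GL (Fin r) ℂ) : Matrix (Fin r) (Fin r) ℂ)ᵀ * ω * (φ * ψ : GL (Fin r) ℂ)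
        = (ψ : Matrix (Fin r) (Fin r) ℂ)ᵀ *
            (((φ : Matrix (Fin r) (Fin r) ℂ)ᵀ * ω * (φ : Matrix (Fin r) (Fin r) ℂ)) *
              (ψ : Matrix (Fin r) (Fin r) ℂ)) := by
          rw [h, transpose_mul]; noncomm_ring
      _ = ω := by
          rw [hφ, ← Matrix.mul_assoc]
          exact hψ
  inv_mem' := by
    intro φ hφ
    have h2 : (φ : Matrix (Fin r) (Fin r) ℂ) *
        ((φ⁻¹ : GL (Fin r) ℂ) : Matrix (Fin r) (Fin r) ℂ) = 1 := φ.mul_inv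
    show ((φ⁻¹ : GL (Fin r) ℂ) : Matrix (Fin r) (Fin r) ℂ)ᵀ * ω * (φ⁻¹ : GL (Fin r) ℂ) = ω
    calc ((φ⁻¹ : GL (Fin r) ℂ) : Matrix (Fin r) (Fin r) ℂ)ᵀ * ω * (φ⁻¹ : GL (Fin r) ℂ)
        = ((φ⁻¹ : GL (Fin r) ℂ) : Matrix (Fin r) (Fin r) ℂ)ᵀ *
            (((φ : Matrix (Fin r) (Fin r) ℂ)ᵀ * ω * (φ : Matrix (Fin r) (Fin r) ℂ)) *
            ((φ⁻¹ : GL (Fin r) ℂ) : Matrix (Fin r) (Fin r) ℂ)) := by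
          rw [hφ, Matrix.mul_assoc]
      _ = (((φ : Matrix (Fin r) (Fin r) ℂ) *
            ((φ⁻¹ : GL (Fin r) ℂ) : Matrix (Fin r) (Fin r) ℂ))ᵀ) * ω *
            ((φ : Matrix (Fin r) (Fin r) ℂ) *
            ((φ⁻¹ : GL (Fin r) ℂ) : Matrix (Fin r) (Fin r) ℂ)) := by
          rw [transpose_mul]; noncomm_ring
      _ = ω := by rw [h2]; simp

/-- The identity component `GO(ω)°`, as a subgroup of `GL(r, ℂ)`: the image in
`GL(r, ℂ)` of the connected component of the identity of `GO(ω)` (with its subspace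
topology). -/
def GOmatConn (r : ℕ) (ω : Matrix (Fin r) (Fin r) ℂ) : Subgroup (GL (Fin r) ℂ) :=
  (Subgroup.connectedComponentOfOne (GOmat r ω)).map (GOmat r ω).subtype


lemma GOconn_det_eq_one {r : ℕ} (m : ℕ) (hrm : r = 2 * m)
    (ω : Matrix (Fin r) (Fin r) ℂ) (hnd : IsUnit ω.det)
    (i₀ j₀ : Fin r) (hω0 : ω i₀ j₀ ≠ 0)
    (φ : GL (Fin r) ℂ) (hφ : φ ∈ GOmatConn r ω)
    (hone : (φ : Matrix (Fin r) (Fin r) ℂ)ᵀ * ω * (φ : Matrix (Fin r) (Fin r) ℂ) = ω) :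
    ((φ : Matrix (Fin r) (Fin r) ℂ)).det = 1 := by
  rw [GOmatConn, Subgroup.mem_map] at hφ
  obtain ⟨ψ, hψC, hψval⟩ := hφ
  have hψval' : (ψ : GL (Fin r) ℂ) = φ := hψval
  have hωdet0 : ω.det ≠ 0 := hnd.ne_zero
  let mat : (GOmat r ω) → Matrix (Fin r) (Fin r) ℂ :=
    fun x => ((x : GL (Fin r) ℂ) : Matrix (Fin r) (Fin r) ℂ)
  have hmat_cont : Continuous mat := Units.continuous_val.comp continuous_subtype_val
  let num : (GOmat r ω) → ℂ := fun x => (mat x).det * ω i₀ j₀ ^ m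
  let den : (GOmat r ω) → ℂ := fun x => ((mat x)ᵀ * ω * (mat x)) i₀ j₀ ^ m
  have hden_eq : ∀ x : (GOmat r ω), ∀ c : ℂˣ,
      (mat x)ᵀ * ω * (mat x) = (c : ℂ) • ω → den x = ((c : ℂ) * ω i₀ j₀) ^ m := by
    intro x c hc
    simp only [den, hc, Matrix.smul_apply, smul_eq_mul]
  have hden_ne : ∀ x : (GOmat r ω), den x ≠ 0 := by
    intro x
    obtain ⟨c, hc⟩ := x.2
    rw [hden_eq x c hc]
    exact pow_ne_zero _ (mul_ne_zero c.ne_zero hω0)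
  let ν : (GOmat r ω) → ℂ := fun x => num x / den x
  have hν_cont : Continuous ν := by
    apply Continuous.div
    · exact hmat_cont.matrix_det.mul continuous_const
    · exact (((hmat_cont.matrix_transpose.matrix_mul continuous_const).matrix_mul
        hmat_cont).matrix_elem i₀ j₀).pow m
    · exact hden_ne
  have hdet2 : ∀ x : (GOmat r ω), ∀ c : ℂˣ, (mat x)ᵀ * ω * (mat x) = (c : ℂ) • ω →
      (mat x).det ^ 2 = (c : ℂ) ^ r := by
    intro x c hc
    have h1 : ((mat x)ᵀ * ω * (mat x)).det = ((c : ℂ) • ω).det := by rw [hc]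
    rw [Matrix.det_mul, Matrix.det_mul, Matrix.det_transpose, Matrix.det_smul,
      Fintype.card_fin] at h1
    have h2 : (mat x).det ^ 2 * ω.det = (c : ℂ) ^ r * ω.det := by linear_combination h1
    exact mul_right_cancel₀ hωdet0 h2
  have hν_sq : ∀ x : (GOmat r ω), ν x = 1 ∨ ν x = -1 := by
    intro x
    obtain ⟨c, hc⟩ := x.2
    have hne : ((c : ℂ) * ω i₀ j₀) ^ m ≠ 0 :=
      pow_ne_zero _ (mul_ne_zero c.ne_zero hω0)
    have hsq : ν x * ν x = 1 := by
      have hd := hden_eq x c hc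
      have h2 := hdet2 x c hc
      have hrr : (c : ℂ) ^ r = ((c : ℂ) ^ m) ^ 2 := by rw [hrm, pow_mul']
      simp only [ν, num, hd]
      rw [div_mul_div_comm, div_eq_one_iff_eq (mul_ne_zero hne hne)]
      linear_combination (ω i₀ j₀ ^ m * ω i₀ j₀ ^ m) * (h2.trans hrr)
    exact mul_self_eq_one_iff.mp hsq
  have hν1 : ν 1 = 1 := by
    have hm1 : mat 1 = 1 := rfl
    simp only [ν, num, den, hm1, Matrix.det_one, Matrix.transpose_one, Matrix.one_mul,
      Matrix.mul_one, one_mul]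
    exact div_self (pow_ne_zero _ hω0)
  have key : ∀ x ∈ connectedComponent (1 : (GOmat r ω)), ν x = 1 := by
    intro x hx
    by_contra hne
    have hxneg : ν x = -1 := (hν_sq x).resolve_left hne
    have hU : IsOpen {z : ℂ | 0 < z.re} := isOpen_lt continuous_const Complex.continuous_re
    have hV : IsOpen {z : ℂ | z.re < 0} := isOpen_lt Complex.continuous_re continuous_const
    have hpc := isPreconnected_connectedComponent (x := (1 : (GOmat r ω)))
    obtain ⟨z, _, hz1, hz2⟩ := hpc (ν ⁻¹' {z : ℂ | 0 < z.re}) (ν ⁻¹' {z : ℂ | z.re < 0})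
      (hU.preimage hν_cont) (hV.preimage hν_cont)
      (by
        intro y _
        rcases hν_sq y with h | h
        · left; simp [Set.mem_preimage, h]
        · right; simp [Set.mem_preimage, h])
      ⟨1, mem_connectedComponent, by simp [Set.mem_preimage, hν1]⟩
      ⟨x, hx, by simp [Set.mem_preimage, hxneg]⟩
    simp only [Set.mem_preimage, Set.mem_setOf_eq] at hz1 hz2
    linarith
  have hψν : ν ψ = 1 := key ψ hψC
  have hmatψ : mat ψ = (φ : Matrix (Fin r) (Fin r) ℂ) := by
    rw [show mat ψ = ((ψ : GL (Fin r) ℂ) : Matrix (Fin r) (Fin r) ℂ) from rfl, hψval']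
  rw [show ν ψ = num ψ / den ψ from rfl] at hψν
  rw [show den ψ = ((mat ψ)ᵀ * ω * (mat ψ)) i₀ j₀ ^ m from rfl, hmatψ, hone] at hψν
  rw [show num ψ = (mat ψ).det * ω i₀ j₀ ^ m from rfl, hmatψ] at hψν
  have hpow : ω i₀ j₀ ^ m ≠ 0 := pow_ne_zero _ hω0
  field_simp at hψν
  exact hψν

/-- Let `ω` be a nondegenerate symmetric `r × r` matrix (`r` even,
`r ≥ 2`), viewed as a bilinear form on `S = ℂʳ`, and let `V` be a finite-dimensional
complex vector space.  Then `GO(ω)°` acts freely on the set of linear maps `f : V → S`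
whose pullback form `f*ω` has rank at least `r - 1`: if `φ ∈ GO(ω)°` satisfies
`φ ∘ f = f` for such an `f`, then `φ = 1`. -/
theorem GOconn_acts_freely_on_corank_le_one_locus
    (r : ℕ) (hr : Even r) (hr2 : 2 ≤ r)
    (ω : Matrix (Fin r) (Fin r) ℂ) (hsymm : ω.IsSymm) (hnd : IsUnit ω.det)
    (V : Type) [AddCommGroup V] [Module ℂ V] [FiniteDimensional ℂ V]
    (f : V →ₗ[ℂ] (Fin r → ℂ))
    (hrank : r - 1 ≤ Module.finrank ℂ
      (LinearMap.range ((Matrix.toLinearMap₂' ℂ ω).compl₁₂ f f)))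
    (φ : GL (Fin r) ℂ) (hφ : φ ∈ GOmatConn r ω)
    (hfix : ∀ v : V, (φ : Matrix (Fin r) (Fin r) ℂ) *ᵥ (f v) = f v) :
    φ = 1 := by
  classical
  obtain ⟨m, hm⟩ := hr
  have hrm : r = 2 * m := by omega
  have hne : Nonempty (Fin r) := ⟨⟨0, by omega⟩⟩
  have hωdet0 : ω.det ≠ 0 := hnd.ne_zero
  have hωne : ∃ i j, ω i j ≠ 0 := by
    by_contra h
    push_neg at h
    rw [show ω = 0 from by ext i j; simpa using h i j, Matrix.det_zero] at hωdet0
    exact hωdet0 rfl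
  obtain ⟨i₀, j₀, hω0⟩ := hωne
  set A : Matrix (Fin r) (Fin r) ℂ := (φ : Matrix (Fin r) (Fin r) ℂ) with hA
  -- multiplier
  obtain ⟨ψ, hψmem, hψval⟩ := Subgroup.mem_map.mp hφ
  have hφGO : φ ∈ GOmat r ω := hψval ▸ ψ.2
  obtain ⟨c, hc⟩ := hφGO
  -- pairing identity with multiplier
  have hpairc : ∀ x y : Fin r → ℂ,
      (A *ᵥ x) ⬝ᵥ (ω *ᵥ (A *ᵥ y)) = (c : ℂ) * (x ⬝ᵥ (ω *ᵥ y)) := by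
    intro x y
    have h0 : x ⬝ᵥ ((Aᵀ * ω * A) *ᵥ y) = x ⬝ᵥ (((c : ℂ) • ω) *ᵥ y) := by
      rw [hc]
    rw [Matrix.mul_assoc, ← Matrix.mulVec_mulVec, ← Matrix.mulVec_mulVec,
      Matrix.dotProduct_mulVec x Aᵀ, Matrix.vecMul_transpose,
      Matrix.smul_mulVec, dotProduct_smul, smul_eq_mul] at h0
    exact h0
  -- nonzero value of the pullback form
  have hBne : (Matrix.toLinearMap₂' ℂ ω).compl₁₂ f f ≠ 0 := by
    intro h
    rw [h, LinearMap.range_zero] at hrank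
    rw [finrank_bot] at hrank
    omega
  obtain ⟨v, hv⟩ := DFunLike.ne_iff.mp hBne
  obtain ⟨v', hvv'⟩ := DFunLike.ne_iff.mp hv
  have hval : (f v) ⬝ᵥ (ω *ᵥ (f v')) ≠ 0 := by
    rw [← Matrix.toLinearMap₂'_apply']
    simpa only [LinearMap.compl₁₂_apply, LinearMap.zero_apply] using hvv'
  -- the multiplier is 1
  have hc1 : (c : ℂ) = 1 := by
    have h1 := hpairc (f v) (f v')
    rw [hfix v, hfix v'] at h1
    have h2 : (c : ℂ) * ((f v) ⬝ᵥ (ω *ᵥ (f v'))) = 1 * ((f v) ⬝ᵥ (ω *ᵥ (f v'))) := by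
      rw [one_mul, ← h1]
    exact mul_right_cancel₀ hval h2
  have hone : Aᵀ * ω * A = ω := by rw [hc, hc1, one_smul]
  have hdet1 : A.det = 1 := GOconn_det_eq_one m hrm ω hnd i₀ j₀ hω0 φ hφ hone
  have hpair : ∀ x y : Fin r → ℂ, (A *ᵥ x) ⬝ᵥ (ω *ᵥ (A *ᵥ y)) = x ⬝ᵥ (ω *ᵥ y) := by
    intro x y
    rw [hpairc, hc1, one_mul]
  -- rank of range of f
  have hWrank : r - 1 ≤ Module.finrank ℂ (LinearMap.range f) := by
    have hfact : (Matrix.toLinearMap₂' ℂ ω).compl₁₂ f f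
        = ((Matrix.toLinearMap₂' ℂ ω).compl₂ f).comp f := by
      ext v1 v2
      simp only [LinearMap.compl₁₂_apply, LinearMap.compl₂_apply, LinearMap.comp_apply]
    rw [hfact, LinearMap.range_comp] at hrank
    exact hrank.trans (Submodule.finrank_map_le _ _)
  set M : Matrix (Fin r) (Fin r) ℂ := A - 1 with hMdef
  suffices hM0 : M = 0 by
    have : A = 1 := by rwa [sub_eq_zero] at hM0
    exact Units.ext this
  by_contra hM0
  have hker : LinearMap.range f ≤ LinearMap.ker M.mulVecLin := by
    rintro x ⟨v1, rfl⟩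
    simp only [LinearMap.mem_ker, Matrix.mulVecLin_apply, hMdef, Matrix.sub_mulVec,
      Matrix.one_mulVec, hfix v1, sub_self]
  have hker' : r - 1 ≤ Module.finrank ℂ (LinearMap.ker M.mulVecLin) :=
    hWrank.trans (Submodule.finrank_mono hker)
  have hrn := LinearMap.finrank_range_add_finrank_ker M.mulVecLin
  rw [Module.finrank_fin_fun] at hrn
  have hrange1 : Module.finrank ℂ (LinearMap.range M.mulVecLin) ≤ 1 := by omega
  -- a spanning vector for the range of M
  have hx0 : ∃ x₀, M *ᵥ x₀ ≠ 0 := by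
    by_contra h
    push_neg at h
    apply hM0
    ext i j
    have h1 := congrFun (h (Pi.single j 1)) i
    simpa using h1
  obtain ⟨x₀, hu0⟩ := hx0
  set u : Fin r → ℂ := M *ᵥ x₀ with hudef
  have hu_mem : u ∈ LinearMap.range M.mulVecLin := ⟨x₀, rfl⟩
  have hspan : Submodule.span ℂ {u} = LinearMap.range M.mulVecLin := by
    apply Submodule.eq_of_le_of_finrank_le
    · exact Submodule.span_le.mpr (Set.singleton_subset_iff.mpr hu_mem)
    · rw [finrank_span_singleton hu0]
      exact hrange1
  have hcol : ∀ j, ∃ t : ℂ, M *ᵥ Pi.single j 1 = t • u := by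
    intro j
    have hmem : M *ᵥ Pi.single j 1 ∈ Submodule.span ℂ {u} :=
      hspan ▸ (⟨Pi.single j 1, rfl⟩ : M *ᵥ Pi.single j 1 ∈ LinearMap.range M.mulVecLin)
    obtain ⟨t, ht⟩ := Submodule.mem_span_singleton.mp hmem
    exact ⟨t, ht.symm⟩
  choose w hw using hcol
  have hMvv : M = Matrix.vecMulVec u w := by
    ext i j
    have h1 := congrFun (hw j) i
    simp only [Matrix.mulVec_single, mul_one, Pi.smul_apply, smul_eq_mul, MulOpposite.op_one, one_smul, Matrix.col_apply] at h1
    rw [Matrix.vecMulVec_apply]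
    rw [h1, mul_comm]
  have hw0 : w ≠ 0 := by
    intro h
    apply hM0
    rw [hMvv, h]
    ext i j
    simp [Matrix.vecMulVec_apply]
  obtain ⟨j₁, hwj⟩ := Function.ne_iff.mp hw0
  have hwj' : w j₁ ≠ 0 := by simpa using hwj
  have hMx : ∀ x, M *ᵥ x = (w ⬝ᵥ x) • u := by
    intro x
    ext i
    simp only [hMvv, Matrix.mulVec, dotProduct, Matrix.vecMulVec_apply,
      Pi.smul_apply, smul_eq_mul]
    rw [Finset.sum_mul]
    exact Finset.sum_congr rfl fun j _ => by ring
  have hA1M : A = 1 + M := by rw [hMdef]; abel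
  have hAx : ∀ x, A *ᵥ x = x + (w ⬝ᵥ x) • u := by
    intro x
    rw [hA1M, Matrix.add_mulVec, Matrix.one_mulVec, hMx]
  -- determinant gives w ⬝ᵥ u = 0
  have hdet' : A.det = 1 + w ⬝ᵥ u := by
    rw [hA1M, hMvv, Matrix.vecMulVec_eq (Fin 1), Matrix.det_one_add_replicateCol_mul_replicateRow]
  rw [hdet'] at hdet1
  have hd0 : w ⬝ᵥ u = 0 := by
    have := hdet1
    linear_combination this
  -- symmetry of the pairing
  have hsymm' : ∀ x y : Fin r → ℂ, x ⬝ᵥ (ω *ᵥ y) = y ⬝ᵥ (ω *ᵥ x) := by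
    intro x y
    calc x ⬝ᵥ (ω *ᵥ y) = (x ᵥ* ω) ⬝ᵥ y := Matrix.dotProduct_mulVec _ _ _
      _ = (x ᵥ* ωᵀ) ⬝ᵥ y := by rw [hsymm.eq]
      _ = (ω *ᵥ x) ⬝ᵥ y := by rw [Matrix.vecMul_transpose]
      _ = y ⬝ᵥ (ω *ᵥ x) := dotProduct_comm _ _
  -- nondegeneracy
  have hnondeg : ∀ z : Fin r → ℂ, (∀ y, z ⬝ᵥ (ω *ᵥ y) = 0) → z = 0 := by
    intro z hz
    have hzω : z ᵥ* ω = 0 := by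
      ext j
      have h1 := hz (Pi.single j 1)
      rw [Matrix.dotProduct_mulVec] at h1
      simpa [dotProduct_single] using h1
    have h2 : z ᵥ* (ω * ω⁻¹) = 0 := by
      rw [← Matrix.vecMul_vecMul, hzω, Matrix.zero_vecMul]
    rwa [Matrix.mul_nonsing_inv ω hnd, Matrix.vecMul_one] at h2
  -- the key relation
  have hstar : ∀ x y : Fin r → ℂ,
      (w ⬝ᵥ y) * (u ⬝ᵥ (ω *ᵥ x)) + (w ⬝ᵥ x) * (u ⬝ᵥ (ω *ᵥ y))
        + (w ⬝ᵥ x) * (w ⬝ᵥ y) * (u ⬝ᵥ (ω *ᵥ u)) = 0 := by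
    intro x y
    have h0 := hpair x y
    rw [hAx, hAx] at h0
    have hexp : (x + (w ⬝ᵥ x) • u) ⬝ᵥ (ω *ᵥ (y + (w ⬝ᵥ y) • u))
        = x ⬝ᵥ (ω *ᵥ y) + (w ⬝ᵥ y) * (x ⬝ᵥ (ω *ᵥ u)) + (w ⬝ᵥ x) * (u ⬝ᵥ (ω *ᵥ y))
          + (w ⬝ᵥ x) * ((w ⬝ᵥ y) * (u ⬝ᵥ (ω *ᵥ u))) := by
      simp only [Matrix.mulVec_add, Matrix.mulVec_smul, dotProduct_add,
        add_dotProduct, dotProduct_smul, smul_dotProduct, smul_eq_mul]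
      ring_nf
    rw [hexp] at h0
    have hxu : x ⬝ᵥ (ω *ᵥ u) = u ⬝ᵥ (ω *ᵥ x) := hsymm' x u
    linear_combination h0 - (w ⬝ᵥ y) * hxu
  set x₁ : Fin r → ℂ := Pi.single j₁ 1 with hx₁
  have hwx₁ : w ⬝ᵥ x₁ = w j₁ := by
    simp [hx₁, dotProduct_single]
  -- the form vanishes on u
  have hs : u ⬝ᵥ (ω *ᵥ u) = 0 := by
    have h := hstar x₁ u
    rw [hd0, hwx₁] at h
    simp only [zero_mul, mul_zero, add_zero, zero_add] at h
    rcases mul_eq_zero.mp h with h' | h'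
    · exact absurd h' hwj'
    · exact h'
  have hgx₁ : u ⬝ᵥ (ω *ᵥ x₁) = 0 := by
    have h := hstar x₁ x₁
    rw [hs, hwx₁] at h
    simp only [mul_zero, add_zero] at h
    have h2 : (2 * w j₁) * (u ⬝ᵥ (ω *ᵥ x₁)) = 0 := by linear_combination h
    rcases mul_eq_zero.mp h2 with h' | h'
    · exact absurd h' (by simpa using hwj')
    · exact h'
  have hgy : ∀ y, u ⬝ᵥ (ω *ᵥ y) = 0 := by
    intro y
    have h := hstar x₁ y
    rw [hs, hgx₁, hwx₁] at h
    simp only [mul_zero, add_zero, zero_add] at h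
    rcases mul_eq_zero.mp h with h' | h'
    · exact absurd h' hwj'
    · exact h'
  exact hu0 (hnondeg u hgy)
end
end

section
/- Assume r ≥ 4. Let V be a finite-dimensional complex vector space and let f : V → S be a linear map whose pullback form f*ω_S has rank r − 2 and whose image f(V) has dimension r − 1. Then the only φ ∈ GO(S)° with φ ∘ f = f is the identity; i.e., the stabilizer of f in GO(S)° is trivial. -/
open Matrix

noncomputable section

variable {r : ℕ}

/-- Assume `r ≥ 4` (`r` even), and let `ω` be a nondegenerate symmetric
`r × r` matrix viewed as a bilinear form on `S = ℂʳ`.  If `f : V → S` is a linear map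
whose pullback form has rank `r - 2` and whose image has dimension `r - 1`, then the only
`φ ∈ GO(ω)°` with `φ ∘ f = f` is the identity. -/
theorem stabilizer_trivial_nonclosed_orbit_case
    (r : ℕ) (hr : Even r) (hr4 : 4 ≤ r)
    (ω : Matrix (Fin r) (Fin r) ℂ) (hsymm : ω.IsSymm) (hnd : IsUnit ω.det)
    (V : Type) [AddCommGroup V] [Module ℂ V] [FiniteDimensional ℂ V]
    (f : V →ₗ[ℂ] (Fin r → ℂ))
    (hrank : Module.finrank ℂ
      (LinearMap.range ((Matrix.toLinearMap₂' ℂ ω).compl₁₂ f f)) = r - 2)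
    (him : Module.finrank ℂ (LinearMap.range f) = r - 1)
    (φ : GL (Fin r) ℂ) (hφ : φ ∈ GOmatConn r ω)
    (hfix : ∀ v : V, (φ : Matrix (Fin r) (Fin r) ℂ) *ᵥ (f v) = f v) :
    φ = 1 := by
  classical
  have hGO : φ ∈ GOmat r ω := by
    obtain ⟨ψ, -, rfl⟩ := hφ
    exact ψ.2
  obtain ⟨c, hc⟩ := hGO
  set P : Matrix (Fin r) (Fin r) ℂ := (φ : Matrix (Fin r) (Fin r) ℂ) with hPdef
  have hdet : ω.det ≠ 0 := hnd.ne_zero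
  have hndg : ω.Nondegenerate := Matrix.nondegenerate_of_det_ne_zero hdet
  have hpi : Module.finrank ℂ (Fin r → ℂ) = r := Module.finrank_fin_fun ℂ
  -- the similitude identity
  have key : ∀ x y : Fin r → ℂ,
      (P *ᵥ x) ⬝ᵥ (ω *ᵥ (P *ᵥ y)) = (c : ℂ) * (x ⬝ᵥ (ω *ᵥ y)) := by
    intro x y
    calc (P *ᵥ x) ⬝ᵥ (ω *ᵥ (P *ᵥ y))
        = (x ᵥ* Pᵀ) ⬝ᵥ ((ω * P) *ᵥ y) := by
          rw [Matrix.vecMul_transpose, Matrix.mulVec_mulVec]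
      _ = ((x ᵥ* Pᵀ) ᵥ* (ω * P)) ⬝ᵥ y := Matrix.dotProduct_mulVec _ _ _
      _ = (x ᵥ* (Pᵀ * ω * P)) ⬝ᵥ y := by
          rw [Matrix.vecMul_vecMul, Matrix.mul_assoc]
      _ = (x ᵥ* ((c : ℂ) • ω)) ⬝ᵥ y := by rw [hc]
      _ = (c : ℂ) * (x ⬝ᵥ (ω *ᵥ y)) := by
          rw [← Matrix.dotProduct_mulVec, Matrix.smul_mulVec, dotProduct_smul,
            smul_eq_mul]
  -- abbreviations
  set A : (Fin r → ℂ) →ₗ[ℂ] Module.Dual ℂ (Fin r → ℂ) := Matrix.toLinearMap₂' ℂ ω with hAdef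
  have hAapp : ∀ x y : Fin r → ℂ, A x y = x ⬝ᵥ (ω *ᵥ y) := fun x y =>
    Matrix.toLinearMap₂'_apply' ω x y
  set B := A.compl₁₂ f f with hBdef
  have hBapp : ∀ v w : V, B v w = (f v) ⬝ᵥ (ω *ᵥ (f w)) := by
    intro v w
    rw [hBdef, LinearMap.compl₁₂_apply, hAapp]
  -- there is a pair of vectors in the image that pair nontrivially
  obtain ⟨v₀, w₀, hv₀⟩ : ∃ v w : V, (f v) ⬝ᵥ (ω *ᵥ (f w)) ≠ 0 := by
    by_contra h
    push_neg at h
    have hB0 : B = 0 := by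
      apply LinearMap.ext; intro v; apply LinearMap.ext; intro w
      rw [LinearMap.zero_apply, LinearMap.zero_apply, hBapp v w]
      exact h v w
    rw [hB0] at hrank
    rw [LinearMap.range_zero, finrank_bot] at hrank
    omega
  -- the multiplier is 1
  have hc1 : (c : ℂ) = 1 := by
    have h := key (f v₀) (f w₀)
    rw [hfix v₀, hfix w₀] at h
    have h' : (c : ℂ) * ((f v₀) ⬝ᵥ (ω *ᵥ (f w₀)))
        = 1 * ((f v₀) ⬝ᵥ (ω *ᵥ (f w₀))) := by rw [one_mul, ← h]
    exact mul_right_cancel₀ hv₀ h'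
  have key1 : ∀ x y : Fin r → ℂ,
      (P *ᵥ x) ⬝ᵥ (ω *ᵥ (P *ᵥ y)) = x ⬝ᵥ (ω *ᵥ y) := by
    intro x y
    rw [key x y, hc1, one_mul]
  -- symmetry of the form
  have sym : ∀ a b : Fin r → ℂ, a ⬝ᵥ (ω *ᵥ b) = b ⬝ᵥ (ω *ᵥ a) := by
    intro a b
    calc a ⬝ᵥ (ω *ᵥ b) = (a ᵥ* ω) ⬝ᵥ b := Matrix.dotProduct_mulVec _ _ _
      _ = (ωᵀ *ᵥ a) ⬝ᵥ b := by rw [← Matrix.vecMul_transpose, Matrix.transpose_transpose]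
      _ = (ω *ᵥ a) ⬝ᵥ b := by rw [hsymm.eq]
      _ = b ⬝ᵥ (ω *ᵥ a) := dotProduct_comm _ _
  -- the difference matrix
  set M : Matrix (Fin r) (Fin r) ℂ := P - 1 with hMdef
  have hPM : ∀ x : Fin r → ℂ, P *ᵥ x = x + M *ᵥ x := by
    intro x
    rw [hMdef, Matrix.sub_mulVec, Matrix.one_mulVec]
    abel
  have hMW : ∀ v : V, M *ᵥ (f v) = 0 := by
    intro v
    rw [hMdef, Matrix.sub_mulVec, Matrix.one_mulVec, hfix v, sub_self]
  have ident : ∀ x y : Fin r → ℂ, (M *ᵥ x) ⬝ᵥ (ω *ᵥ y) + x ⬝ᵥ (ω *ᵥ (M *ᵥ y))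
      + (M *ᵥ x) ⬝ᵥ (ω *ᵥ (M *ᵥ y)) = 0 := by
    intro x y
    have h := key1 x y
    rw [hPM x, hPM y, Matrix.mulVec_add, add_dotProduct, dotProduct_add,
      dotProduct_add] at h
    linear_combination h
  -- the image subspace
  set W := LinearMap.range f with hWdef
  -- the orthogonal complement of W, as the kernel of a map to the dual of W
  have hAker : LinearMap.ker A = ⊥ := by
    rw [LinearMap.ker_eq_bot']
    intro x hx
    apply hndg.eq_zero_of_ortho
    intro w
    have h := LinearMap.congr_fun hx w
    rw [hAapp] at h
    simpa using h
  have hAsurj : Function.Surjective A := by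
    have hdim : Module.finrank ℂ (Fin r → ℂ)
        = Module.finrank ℂ (Module.Dual ℂ (Fin r → ℂ)) :=
      (Subspace.dual_finrank_eq).symm
    exact (LinearMap.injective_iff_surjective_of_finrank_eq_finrank hdim).mp
      (LinearMap.ker_eq_bot.mp hAker)
  set g : (Fin r → ℂ) →ₗ[ℂ] Module.Dual ℂ W := (W.subtype.dualMap).comp A with hgdef
  have hgapp : ∀ (z : Fin r → ℂ) (u : W), g z u = z ⬝ᵥ (ω *ᵥ (u : Fin r → ℂ)) := by
    intro z u
    rw [hgdef]
    simp only [LinearMap.comp_apply, LinearMap.dualMap_apply, Submodule.coe_subtype]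
    exact hAapp z u
  have hgsurj : Function.Surjective g :=
    (LinearMap.dualMap_surjective_of_injective (Submodule.injective_subtype W)).comp hAsurj
  have hr1 : Module.finrank ℂ (LinearMap.ker g) = 1 := by
    have h1 := LinearMap.finrank_range_add_finrank_ker g
    rw [LinearMap.range_eq_top.mpr hgsurj, finrank_top, hpi] at h1
    have h2 : Module.finrank ℂ (Module.Dual ℂ W) = r - 1 := by
      rw [Subspace.dual_finrank_eq, him]
    omega
  -- ker f ≤ ker B
  have hkfB : LinearMap.ker f ≤ LinearMap.ker B := by
    intro v hv
    rw [LinearMap.mem_ker] at hv ⊢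
    ext w
    rw [hBapp v w, hv]
    simp
  -- the radical of the restricted form
  have hmap : Submodule.map f (LinearMap.ker B) = W ⊓ LinearMap.ker g := by
    apply le_antisymm
    · rintro z ⟨v, hv, rfl⟩
      replace hv : B v = 0 := hv
      refine ⟨LinearMap.mem_range_self f v, ?_⟩
      simp only [SetLike.mem_coe, LinearMap.mem_ker]
      apply LinearMap.ext
      rintro ⟨u, v', rfl⟩
      have h := LinearMap.congr_fun hv v'
      rw [hBapp v v'] at h
      rw [hgapp]
      simpa using h
    · rintro z ⟨hzW, hzg⟩
      replace hzg : g z = 0 := hzg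
      obtain ⟨v, rfl⟩ := hzW
      refine ⟨v, ?_, rfl⟩
      simp only [SetLike.mem_coe, LinearMap.mem_ker]
      apply LinearMap.ext
      intro v'
      have h := LinearMap.congr_fun hzg ⟨f v', LinearMap.mem_range_self f v'⟩
      rw [hgapp] at h
      rw [hBapp v v']
      simpa using h
  have hrad : Module.finrank ℂ (Submodule.map f (LinearMap.ker B)) = 1 := by
    have h1 := LinearMap.finrank_range_add_finrank_ker B
    rw [hrank] at h1
    have h2 := LinearMap.finrank_range_add_finrank_ker f
    rw [him] at h2
    have h3 := LinearMap.finrank_range_add_finrank_ker (f.domRestrict (LinearMap.ker B))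
    rw [LinearMap.range_domRestrict, LinearMap.ker_domRestrict] at h3
    have h4 : Module.finrank ℂ
        (Submodule.comap (LinearMap.ker B).subtype (LinearMap.ker f))
        = Module.finrank ℂ (LinearMap.ker f) :=
      (Submodule.comapSubtypeEquivOfLe hkfB).finrank_eq
    omega
  have hkerg_le : LinearMap.ker g ≤ W := by
    have hle : Submodule.map f (LinearMap.ker B) ≤ LinearMap.ker g := by
      rw [hmap]; exact inf_le_right
    have heq : Submodule.map f (LinearMap.ker B) = LinearMap.ker g :=
      Submodule.eq_of_le_of_finrank_le hle (by rw [hrad, hr1])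
    rw [← heq, hmap]
    exact inf_le_left
  -- pick a vector outside W
  obtain ⟨x₀, hx₀⟩ : ∃ x, x ∉ W := by
    by_contra h
    push_neg at h
    have hWtop : W = ⊤ := Submodule.eq_top_iff'.mpr h
    rw [hWtop, finrank_top, hpi] at him
    omega
  -- any submodule containing W and x₀ is everything
  have htop : ∀ K : Submodule ℂ (Fin r → ℂ), W ≤ K → x₀ ∈ K → K = ⊤ := by
    intro K hWK hxK
    have hlt : W < K := lt_of_le_of_ne hWK (by rintro rfl; exact hx₀ hxK)
    have h1 : Module.finrank ℂ W < Module.finrank ℂ K :=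
      Submodule.finrank_lt_finrank_of_lt hlt
    rw [him] at h1
    have h2 : Module.finrank ℂ K ≤ r := (Submodule.finrank_le K).trans hpi.le
    apply Submodule.eq_top_of_finrank_eq
    rw [hpi]
    omega
  -- the would-be reflection vector
  set e : Fin r → ℂ := M *ᵥ x₀ with hedef
  have heW : ∀ v : V, e ⬝ᵥ (ω *ᵥ (f v)) = 0 := by
    intro v
    have h := ident x₀ (f v)
    rw [hMW v] at h
    simpa using h
  have hekerg : e ∈ LinearMap.ker g := by
    rw [LinearMap.mem_ker]
    apply LinearMap.ext
    rintro ⟨u, v, rfl⟩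
    rw [hgapp]
    simpa using heW v
  have heWmem : e ∈ W := hkerg_le hekerg
  obtain ⟨ve, hve⟩ := heWmem
  have hee : e ⬝ᵥ (ω *ᵥ e) = 0 := by have h := heW ve; rwa [hve] at h
  have hMe : M *ᵥ e = 0 := by have h := hMW ve; rwa [hve] at h
  have hex0 : e ⬝ᵥ (ω *ᵥ x₀) = 0 := by
    have h := ident x₀ x₀
    rw [← hedef, sym x₀ e, hee] at h
    linear_combination h / 2
  have he0 : e = 0 := by
    apply hndg.eq_zero_of_ortho
    intro w
    have hK : LinearMap.ker (A e) = ⊤ := by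
      apply htop
      · rintro u ⟨v, rfl⟩
        rw [LinearMap.mem_ker, hAapp]
        exact heW v
      · rw [LinearMap.mem_ker, hAapp]
        exact hex0
    have hw : w ∈ LinearMap.ker (A e) := hK ▸ Submodule.mem_top
    rw [LinearMap.mem_ker, hAapp] at hw
    exact hw
  -- M kills everything
  have hM0 : ∀ z : Fin r → ℂ, M *ᵥ z = 0 := by
    intro z
    have hK : LinearMap.ker M.mulVecLin = ⊤ := by
      apply htop
      · rintro u ⟨v, rfl⟩
        rw [LinearMap.mem_ker, Matrix.mulVecLin_apply]
        exact hMW v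
      · rw [LinearMap.mem_ker, Matrix.mulVecLin_apply, ← hedef]
        exact he0
    have hz : z ∈ LinearMap.ker M.mulVecLin := hK ▸ Submodule.mem_top
    rw [LinearMap.mem_ker, Matrix.mulVecLin_apply] at hz
    exact hz
  have hM : M = 0 := by
    ext i j
    have h := congrFun (hM0 (Pi.single j 1)) i
    rw [Matrix.mulVec_single] at h
    simpa using h
  have hPone : P = 1 := by
    have := hMdef.symm.trans hM
    rwa [sub_eq_zero] at this
  exact Units.ext hPone
end
end
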